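/- Let q be a prime power and A, B ⊆ F_q^× finite sets. Suppose there exist finite sets Q, R ⊆ F_q and a real number T ≥ 1 so that for each a ∈ A, the number of representations r_{Q+R}(a) = |{(q',r) ∈ Q×R : q' + r = a}| is at least T. Then the multiplicative energy satisfies E^×(A,B) ≤ C·(|A||B|²|Q||R|/(Tq) + q|Q||R||B| log₂(2|A|)/T²) for an absolute constant C, where E^×(A,B) counts quadruples (a1,a2,b1,b2) ∈ A²×B² with a1·b1 = a2·b2. -/

import Mathlib

open Finset

section Aux

variable {F : Type} [Field F] [Fintype F] [DecidableEq F]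

lemma aux_lines_thru (p : F × F) :
    ((univ : Finset (F × F)).filter (fun l => p.2 = l.1 * p.1 + l.2)).card
      = Fintype.card F := by
  have himg : ((univ : Finset (F × F)).filter (fun l => p.2 = l.1 * p.1 + l.2))
      = (univ : Finset F).image (fun m : F => (m, p.2 - m * p.1)) := by
    ext l
    simp only [mem_filter, mem_univ, true_and, mem_image]
    constructor
    · intro h
      refine ⟨l.1, ?_⟩
      rw [Prod.ext_iff]
      exact ⟨rfl, by rw [h]; ring⟩
    · rintro ⟨m, rfl⟩; ring
  rw [himg, Finset.card_image_of_injective _ (fun a b h => congrArg Prod.fst h),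
    card_univ]

lemma aux_lines_thru_two {p p' : F × F} (hne : p ≠ p') :
    ((univ : Finset (F × F)).filter
      (fun l => p.2 = l.1 * p.1 + l.2 ∧ p'.2 = l.1 * p'.1 + l.2)).card ≤ 1 := by
  rw [Finset.card_le_one]
  rintro l hl m hm
  simp only [mem_filter, mem_univ, true_and] at hl hm
  obtain ⟨h1, h2⟩ := hl
  obtain ⟨h3, h4⟩ := hm
  have hx : p.1 ≠ p'.1 := by
    intro hx
    apply hne
    have hy : p.2 = p'.2 := by rw [h1, h2, hx]
    exact Prod.ext hx hy
  have hslope : l.1 = m.1 := by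
    have hz : (l.1 - m.1) * (p.1 - p'.1) = 0 := by linear_combination -h1 + h2 + h3 - h4
    rcases mul_eq_zero.mp hz with h | h
    · exact sub_eq_zero.mp h
    · exact absurd (sub_eq_zero.mp h) hx
  have hint : l.2 = m.2 := by linear_combination -h1 + h3 - p.1 * hslope
  exact Prod.ext hslope hint

lemma aux_sum_lines (P : Finset (F × F)) :
    ∑ l : F × F, (P.filter (fun p => p.2 = l.1 * p.1 + l.2)).card
      = P.card * Fintype.card F := by
  simp_rw [Finset.card_filter]
  rw [Finset.sum_comm]
  have h : ∀ p ∈ P, (∑ l : F × F, if p.2 = l.1 * p.1 + l.2 then 1 else 0)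
      = Fintype.card F := by
    intro p _
    rw [← Finset.card_filter]
    exact aux_lines_thru p
  rw [Finset.sum_congr rfl h, Finset.sum_const, smul_eq_mul]

lemma aux_sum_sq_lines (P : Finset (F × F)) :
    ∑ l : F × F, ((P.filter (fun p => p.2 = l.1 * p.1 + l.2)).card) ^ 2
      ≤ P.card * Fintype.card F + P.card * P.card := by
  have expand : ∀ l : F × F,
      ((P.filter (fun p => p.2 = l.1 * p.1 + l.2)).card) ^ 2
      = ∑ p ∈ P, ∑ p' ∈ P,
          if p.2 = l.1 * p.1 + l.2 ∧ p'.2 = l.1 * p'.1 + l.2 then 1 else 0 := by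
    intro l
    rw [sq, Finset.card_filter, Finset.sum_mul_sum]
    refine Finset.sum_congr rfl fun p _ => Finset.sum_congr rfl fun p' _ => ?_
    by_cases h1 : p.2 = l.1 * p.1 + l.2 <;> by_cases h2 : p'.2 = l.1 * p'.1 + l.2 <;>
      simp [h1, h2]
  calc ∑ l : F × F, ((P.filter (fun p => p.2 = l.1 * p.1 + l.2)).card) ^ 2
      = ∑ l : F × F, ∑ p ∈ P, ∑ p' ∈ P,
          if p.2 = l.1 * p.1 + l.2 ∧ p'.2 = l.1 * p'.1 + l.2 then 1 else 0 :=
        Finset.sum_congr rfl fun l _ => expand l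
    _ = ∑ p ∈ P, ∑ l : F × F, ∑ p' ∈ P,
          if p.2 = l.1 * p.1 + l.2 ∧ p'.2 = l.1 * p'.1 + l.2 then 1 else 0 :=
        Finset.sum_comm
    _ = ∑ p ∈ P, ∑ p' ∈ P, ∑ l : F × F,
          if p.2 = l.1 * p.1 + l.2 ∧ p'.2 = l.1 * p'.1 + l.2 then 1 else 0 :=
        Finset.sum_congr rfl fun p _ => Finset.sum_comm
    _ = ∑ p ∈ P, ∑ p' ∈ P, ((univ : Finset (F × F)).filter
          (fun l => p.2 = l.1 * p.1 + l.2 ∧ p'.2 = l.1 * p'.1 + l.2)).card :=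
        Finset.sum_congr rfl fun p _ => Finset.sum_congr rfl fun p' _ =>
          (Finset.card_filter _ _).symm
    _ ≤ P.card * Fintype.card F + P.card * P.card := by
        have hbound : ∀ p ∈ P, (∑ p' ∈ P, ((univ : Finset (F × F)).filter
            (fun l => p.2 = l.1 * p.1 + l.2 ∧ p'.2 = l.1 * p'.1 + l.2)).card)
            ≤ Fintype.card F + P.card := by
          intro p hp
          rw [← Finset.add_sum_erase _ _ hp]
          have hpp : ((univ : Finset (F × F)).filter
              (fun l => p.2 = l.1 * p.1 + l.2 ∧ p.2 = l.1 * p.1 + l.2)).card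
              = Fintype.card F := by
            simp only [and_self]
            exact aux_lines_thru p
          rw [hpp]
          have h2 : ∑ p' ∈ P.erase p, ((univ : Finset (F × F)).filter
              (fun l => p.2 = l.1 * p.1 + l.2 ∧ p'.2 = l.1 * p'.1 + l.2)).card
              ≤ ∑ _p' ∈ P.erase p, 1 := by
            refine Finset.sum_le_sum fun p' hp' => ?_
            exact aux_lines_thru_two (fun h => (Finset.mem_erase.mp hp').1 (by rw [h]))
          refine Nat.add_le_add le_rfl (h2.trans ?_)
          rw [Finset.sum_const, smul_eq_mul, mul_one]
          exact (Finset.card_erase_of_mem hp).le.trans (Nat.sub_le _ _)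
        calc ∑ p ∈ P, ∑ p' ∈ P, ((univ : Finset (F × F)).filter
              (fun l => p.2 = l.1 * p.1 + l.2 ∧ p'.2 = l.1 * p'.1 + l.2)).card
            ≤ ∑ _p ∈ P, (Fintype.card F + P.card) := Finset.sum_le_sum hbound
          _ = P.card * Fintype.card F + P.card * P.card := by
              rw [Finset.sum_const, smul_eq_mul]; ring

/-- Vinh-type incidence bound, elementary second-moment proof. -/
lemma aux_incidence (P L : Finset (F × F)) :
    (∑ l ∈ L, ((P.filter (fun p => p.2 = l.1 * p.1 + l.2)).card : ℝ))
      ≤ (P.card : ℝ) * L.card / (Fintype.card F)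
        + Real.sqrt ((Fintype.card F) * P.card * L.card) := by
  have hq0 : (0 : ℝ) < (Fintype.card F : ℝ) := by
    exact_mod_cast Fintype.card_pos
  set q : ℝ := (Fintype.card F : ℝ) with hqdef
  set f : F × F → ℝ := fun l => ((P.filter (fun p => p.2 = l.1 * p.1 + l.2)).card : ℝ)
    with hfdef
  set μ : ℝ := (P.card : ℝ) / q with hμdef
  have hsum : ∑ l : F × F, f l = (P.card : ℝ) * q := by
    simp only [hfdef]
    rw [hqdef]
    exact_mod_cast aux_sum_lines P
  have hsumsq : ∑ l : F × F, (f l) ^ 2 ≤ (P.card : ℝ) * q + (P.card : ℝ) * P.card := by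
    simp only [hfdef]
    rw [hqdef]
    exact_mod_cast aux_sum_sq_lines P
  have hcardFF : (((univ : Finset (F × F))).card : ℝ) = q * q := by
    rw [card_univ, Fintype.card_prod]
    push_cast
    rfl
  have hμq : μ * q = (P.card : ℝ) := div_mul_cancel₀ _ (ne_of_gt hq0)
  have hvar : ∑ l : F × F, (f l - μ) ^ 2 ≤ (P.card : ℝ) * q := by
    have hexp : ∑ l : F × F, (f l - μ) ^ 2
        = (∑ l : F × F, (f l) ^ 2) - 2 * μ * (∑ l : F × F, f l)
          + ((univ : Finset (F × F)).card : ℝ) * μ ^ 2 := by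
      rw [Finset.mul_sum, ← Finset.sum_sub_distrib]
      rw [show ((univ : Finset (F × F)).card : ℝ) * μ ^ 2
          = ∑ _l : F × F, μ ^ 2 by rw [Finset.sum_const, nsmul_eq_mul]]
      rw [← Finset.sum_add_distrib]
      exact Finset.sum_congr rfl fun l _ => by ring
    rw [hexp, hsum, hcardFF]
    have h1 : 2 * μ * ((P.card : ℝ) * q) = 2 * (P.card : ℝ) * P.card := by
      rw [show 2 * μ * ((P.card : ℝ) * q) = 2 * (P.card : ℝ) * (μ * q) by ring, hμq]
    have h2 : q * q * μ ^ 2 = (P.card : ℝ) * P.card := by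
      rw [show q * q * μ ^ 2 = (μ * q) * (μ * q) by ring, hμq]
    rw [h1, h2]
    linarith [hsumsq]
  have hCS : (∑ l ∈ L, (f l - μ)) ^ 2 ≤ (L.card : ℝ) * ∑ l ∈ L, (f l - μ) ^ 2 :=
    sq_sum_le_card_mul_sum_sq
  have hsub : ∑ l ∈ L, (f l - μ) ^ 2 ≤ ∑ l : F × F, (f l - μ) ^ 2 :=
    Finset.sum_le_sum_of_subset_of_nonneg (subset_univ L) fun _ _ _ => sq_nonneg _
  have hmain : ∑ l ∈ L, (f l - μ) ≤ Real.sqrt (q * P.card * L.card) := by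
    rcases le_or_gt (∑ l ∈ L, (f l - μ)) 0 with h | h
    · exact h.trans (Real.sqrt_nonneg _)
    · rw [show q * (P.card : ℝ) * L.card = (L.card : ℝ) * ((P.card : ℝ) * q) by ring]
      refine (Real.le_sqrt h.le (by positivity)).mpr ?_
      calc (∑ l ∈ L, (f l - μ)) ^ 2 ≤ (L.card : ℝ) * ∑ l ∈ L, (f l - μ) ^ 2 := hCS
        _ ≤ (L.card : ℝ) * ((P.card : ℝ) * q) := by
            refine mul_le_mul_of_nonneg_left (hsub.trans hvar) (by positivity)
  have hsplit : ∑ l ∈ L, f l = (∑ l ∈ L, (f l - μ)) + (L.card : ℝ) * μ := by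
    rw [Finset.sum_sub_distrib, Finset.sum_const, nsmul_eq_mul]
    ring
  rw [hsplit]
  have : (L.card : ℝ) * μ = (P.card : ℝ) * L.card / q := by
    rw [hμdef]; ring
  rw [this]
  linarith [hmain]

end Aux

set_option maxHeartbeats 2000000 in
theorem mult_energy_bound_from_additive_structure :
    ∃ C : ℝ, 0 < C ∧
      ∀ (F : Type) (_ : Field F) (_ : Fintype F) (_ : DecidableEq F)
        (A B Q R : Finset F) (T : ℝ),
        (0 : F) ∉ A → (0 : F) ∉ B → 1 ≤ T →
        (∀ a ∈ A, T ≤ (((Q ×ˢ R).filter (fun p => p.1 + p.2 = a)).card : ℝ)) →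
        ((((A ×ˢ A) ×ˢ (B ×ˢ B)).filter
            (fun x => x.1.1 * x.2.1 = x.1.2 * x.2.2)).card : ℝ) ≤
          C * (A.card * B.card ^ 2 * Q.card * R.card / (T * Fintype.card F) +
            (Fintype.card F) * Q.card * R.card * B.card *
              Real.logb 2 (2 * A.card) / T ^ 2) := by
  refine ⟨16, by norm_num, ?_⟩
  intro F _ _ _ A B Q R T hA0 hB0 hT hrep
  have hq0 : (0 : ℝ) < (Fintype.card F : ℝ) := by exact_mod_cast Fintype.card_pos
  have hT0 : (0 : ℝ) < T := lt_of_lt_of_le one_pos hT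
  rcases A.eq_empty_or_nonempty with rfl | hAne
  · simp [Real.logb_zero]
  have hA1 : 1 ≤ A.card := Finset.card_pos.mpr hAne
  set qR : ℝ := (Fintype.card F : ℝ) with hqRdef
  set r : F → ℕ := fun s => ((A ×ˢ B).filter (fun p => p.1 * p.2 = s)).card with hrdef
  clear_value qR r
  -- r s ≤ |A|
  have hrA : ∀ s : F, r s ≤ A.card := by
    intro s
    simp only [hrdef]
    refine Finset.card_le_card_of_injOn (fun p => p.1) ?_ ?_
    · intro p hp
      simp only [coe_filter, Set.mem_setOf_eq, mem_coe, mem_filter, mem_product] at hp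
      exact hp.1.1
    · intro p hp p' hp' h
      simp only [coe_filter, Set.mem_setOf_eq, mem_product] at hp hp'
      have ha : p.1 ≠ 0 := fun h0 => hA0 (h0 ▸ hp.1.1)
      have h' : p.1 = p'.1 := h
      refine Prod.ext h' ?_
      have hpp : p.1 * p.2 = p.1 * p'.2 := by
        rw [hp.2, ← hp'.2, h']
      exact mul_left_cancel₀ ha hpp
  -- ∑ r s = |A||B|
  have hrsum : ∑ s : F, r s = A.card * B.card := by
    simp only [hrdef]
    rw [← Finset.card_product]
    exact (Finset.card_eq_sum_card_fiberwise
      (f := fun p : F × F => p.1 * p.2) (t := univ) (fun x _ => mem_univ _)).symm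
  -- energy = ∑ r²
  have hE : ((((A ×ˢ A) ×ˢ (B ×ˢ B)).filter
      (fun x => x.1.1 * x.2.1 = x.1.2 * x.2.2)).card) = ∑ s : F, (r s) ^ 2 := by
    have rhs : ∑ s : F, (r s) ^ 2
        = ∑ y ∈ A ×ˢ B, ∑ z ∈ A ×ˢ B, if y.1 * y.2 = z.1 * z.2 then 1 else 0 := by
      have hterm : ∀ s : F, (r s) ^ 2 = ∑ y ∈ A ×ˢ B, ∑ z ∈ A ×ˢ B,
          (if y.1 * y.2 = s then 1 else 0) * (if z.1 * z.2 = s then 1 else 0) := by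
        intro s
        simp only [hrdef]
        rw [sq, Finset.card_filter, Finset.sum_mul_sum]
      rw [Finset.sum_congr rfl fun s _ => hterm s, Finset.sum_comm]
      refine Finset.sum_congr rfl fun y _ => ?_
      rw [Finset.sum_comm]
      refine Finset.sum_congr rfl fun z _ => ?_
      rw [Finset.sum_eq_single (y.1 * y.2)]
      · simp [eq_comm]
      · intro b _ hb
        rw [if_neg (fun h => hb h.symm), zero_mul]
      · intro h
        exact absurd (mem_univ _) h
    rw [rhs, Finset.card_filter, Finset.sum_product, Finset.sum_product]
    simp only [Finset.sum_product]
    refine Finset.sum_congr rfl fun a1 _ => ?_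
    exact Finset.sum_comm
  -- split of r into fibers over b
  have hrsplit : ∀ s : F, r s = ∑ b ∈ B, (A.filter (fun a => a * b = s)).card := by
    intro s
    simp only [hrdef]
    rw [Finset.card_filter, Finset.sum_product, Finset.sum_comm]
    exact Finset.sum_congr rfl fun b _ => (Finset.card_filter _ _).symm
  set J : ℕ := Nat.log 2 A.card + 1 with hJdef
  set D : ℕ → Finset F := fun j =>
    univ.filter (fun s => 1 ≤ r s ∧ Nat.log 2 (r s) = j) with hDdef
  set M : ℝ := (Q.card : ℝ) * R.card * B.card with hMdef
  clear_value J D M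
  have hM0 : (0 : ℝ) ≤ M := by rw [hMdef]; positivity
  -- per-class bound
  have hclass : ∀ j : ℕ, (∑ s ∈ D j, ((r s : ℝ)) ^ 2)
      ≤ 4 * M / (qR * T) * (∑ s ∈ D j, (r s : ℝ)) + 16 * qR * M / T ^ 2 := by
    intro j
    have hc2nn : (0:ℝ) ≤ 16 * qR * M / T ^ 2 :=
      div_nonneg (mul_nonneg (mul_nonneg (by norm_num) hq0.le) hM0) (pow_pos hT0 2).le
    rcases (D j).eq_empty_or_nonempty with hDe | hDne
    · rw [hDe]
      simp only [Finset.sum_empty, mul_zero, zero_add]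
      exact hc2nn
    have hd0' : (0 : ℝ) < ((D j).card : ℝ) := by
      exact_mod_cast Finset.card_pos.mpr hDne
    set d : ℝ := ((D j).card : ℝ) with hddef
    set X : ℝ := ∑ s ∈ D j, (r s : ℝ) with hXdef
    set τ : ℝ := (2 : ℝ) ^ j with hτdef
    clear_value d X τ
    have hd0 : (0 : ℝ) < d := hd0'
    have hτ0 : (0 : ℝ) < τ := by rw [hτdef]; positivity
    have hX0 : (0 : ℝ) ≤ X := by
      rw [hXdef]; exact Finset.sum_nonneg fun s _ => by positivity
    have hlow : ∀ s ∈ D j, τ ≤ (r s : ℝ) := by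
      intro s hs
      simp only [hDdef, mem_filter, mem_univ, true_and] at hs
      have := Nat.pow_log_le_self 2 (Nat.one_le_iff_ne_zero.mp hs.1)
      rw [hs.2] at this
      rw [hτdef]
      exact_mod_cast this
    have hup : ∀ s ∈ D j, (r s : ℝ) ≤ 2 * τ := by
      intro s hs
      simp only [hDdef, mem_filter, mem_univ, true_and] at hs
      have := Nat.lt_pow_succ_log_self (by norm_num : 1 < 2) (r s)
      rw [hs.2] at this
      have h2 : (r s : ℝ) < (2 : ℝ) ^ (j + 1) := by exact_mod_cast this
      rw [pow_succ] at h2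
      rw [hτdef]
      linarith [h2]
    have hτd : τ * d ≤ X := by
      rw [hXdef, hddef]
      have h : ∑ _s ∈ D j, τ ≤ ∑ s ∈ D j, (r s : ℝ) := Finset.sum_le_sum hlow
      rw [Finset.sum_const, nsmul_eq_mul] at h
      linarith [h]
    -- counting setup
    set P : Finset (F × F) := R ×ˢ (D j) with hPdef
    set N : ℕ := (((Q ×ˢ R) ×ˢ (B ×ˢ (D j))).filter
      (fun x => (x.1.1 + x.1.2) * x.2.1 = x.2.2)).card with hNdef
    clear_value P N
    -- lower bound on N
    have hbs : ∀ b ∈ B, ∀ s : F,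
        T * ((A.filter (fun a => a * b = s)).card : ℝ)
        ≤ (((Q ×ˢ R).filter (fun p => (p.1 + p.2) * b = s)).card : ℝ) := by
      intro b hb s
      have hbn : b ≠ 0 := fun h => hB0 (h ▸ hb)
      rcases (A.filter (fun a => a * b = s)).eq_empty_or_nonempty with he | ⟨a, ha⟩
      · rw [he]
        simp only [card_empty, Nat.cast_zero, mul_zero]
        positivity
      · have hone : (A.filter (fun a => a * b = s)).card = 1 := by
          rw [Finset.card_eq_one]
          refine ⟨a, Finset.eq_singleton_iff_unique_mem.mpr ⟨ha, fun x hx => ?_⟩⟩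
          simp only [mem_filter] at hx ha
          exact mul_right_cancel₀ hbn (hx.2.trans ha.2.symm)
        rw [hone]
        simp only [Nat.cast_one, mul_one]
        simp only [mem_filter] at ha
        refine (hrep a ha.1).trans ?_
        have hsub : (Q ×ˢ R).filter (fun p => p.1 + p.2 = a)
            ⊆ (Q ×ˢ R).filter (fun p => (p.1 + p.2) * b = s) := by
          intro p hp
          simp only [mem_filter] at hp ⊢
          exact ⟨hp.1, by rw [hp.2, ha.2]⟩
        exact_mod_cast Nat.cast_le.mpr (Finset.card_le_card hsub)
    have hNsplit : N = ∑ b ∈ B, ∑ s ∈ D j,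
        ((Q ×ˢ R).filter (fun p => (p.1 + p.2) * b = s)).card := by
      rw [hNdef, Finset.card_filter, Finset.sum_product, Finset.sum_comm,
        Finset.sum_product]
      refine Finset.sum_congr rfl fun b _ => Finset.sum_congr rfl fun s _ =>
        (Finset.card_filter _ _).symm
    have hNl : T * X ≤ (N : ℝ) := by
      have h1 : T * X = ∑ b ∈ B, ∑ s ∈ D j,
          T * ((A.filter (fun a => a * b = s)).card : ℝ) := by
        rw [hXdef, Finset.mul_sum]
        have : ∀ s ∈ D j, T * (r s : ℝ)
            = ∑ b ∈ B, T * ((A.filter (fun a => a * b = s)).card : ℝ) := by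
          intro s _
          rw [hrsplit s]
          push_cast
          rw [Finset.mul_sum]
        rw [Finset.sum_congr rfl this, Finset.sum_comm]
      rw [h1, hNsplit]
      push_cast
      exact Finset.sum_le_sum fun b hb => Finset.sum_le_sum fun s _ => hbs b hb s
    -- upper bound on N via incidences
    have hNI : N = ∑ x ∈ Q ×ˢ B,
        (P.filter (fun p => p.2 = x.2 * p.1 + x.1 * x.2)).card := by
      rw [hNdef, Finset.card_filter, Finset.sum_product, Finset.sum_product]
      conv_rhs => rw [Finset.sum_product]
      refine Finset.sum_congr rfl fun q' _ => ?_
      calc ∑ r' ∈ R, ∑ bs ∈ B ×ˢ D j, (if (q' + r') * bs.1 = bs.2 then 1 else 0)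
          = ∑ r' ∈ R, ∑ b ∈ B, ∑ s ∈ D j, (if (q' + r') * b = s then 1 else 0) :=
            Finset.sum_congr rfl fun r' _ => by rw [Finset.sum_product]
        _ = ∑ b ∈ B, ∑ r' ∈ R, ∑ s ∈ D j, (if (q' + r') * b = s then 1 else 0) :=
            Finset.sum_comm
        _ = ∑ b ∈ B, (P.filter (fun p => p.2 = b * p.1 + q' * b)).card := by
            refine Finset.sum_congr rfl fun b _ => ?_
            rw [hPdef, Finset.card_filter, Finset.sum_product]
            refine Finset.sum_congr rfl fun r' _ => Finset.sum_congr rfl fun s _ =>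
              if_congr ?_ rfl rfl
            constructor <;> intro h <;> linear_combination -h
    have hNu : (N : ℝ) ≤ M * d / qR + Real.sqrt (qR * (M * d)) := by
      set L : Finset (F × F) := (Q ×ˢ B).image (fun x => (x.2, x.1 * x.2)) with hLdef
      clear_value L
      have hinj : ∀ x ∈ Q ×ˢ B, ∀ y ∈ Q ×ˢ B,
          (fun x : F × F => (x.2, x.1 * x.2)) x
            = (fun x : F × F => (x.2, x.1 * x.2)) y → x = y := by
        intro x hx y hy h
        simp only [Prod.mk.injEq] at h
        simp only [mem_product] at hx hy
        have hxb : x.2 ≠ 0 := fun h0 => hB0 (h0 ▸ hx.2)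
        have h1 : x.1 = y.1 := by
          have := h.2
          rw [h.1] at this
          exact mul_right_cancel₀ (h.1 ▸ hxb) this
        exact Prod.ext h1 h.1
      have hNL : (N : ℝ) = ∑ l ∈ L, ((P.filter
          (fun p => p.2 = l.1 * p.1 + l.2)).card : ℝ) := by
        rw [hLdef, Finset.sum_image hinj, hNI]
        push_cast
        rfl
      rw [hNL]
      have hPcard : (P.card : ℝ) = (R.card : ℝ) * d := by
        rw [hPdef, Finset.card_product, hddef]
        push_cast
        ring
      have hLcard : (L.card : ℝ) ≤ (Q.card : ℝ) * B.card := by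
        have h := Finset.card_image_le (s := Q ×ˢ B) (f := fun x : F × F => (x.2, x.1 * x.2))
        rw [Finset.card_product] at h
        rw [hLdef]
        exact_mod_cast h
      have hL0 : (0 : ℝ) ≤ (L.card : ℝ) := by positivity
      refine (aux_incidence P L).trans ?_
      have h1 : (P.card : ℝ) * (L.card : ℝ) ≤ M * d := by
        rw [hPcard, hMdef]
        calc (R.card : ℝ) * d * L.card
            ≤ (R.card : ℝ) * d * ((Q.card : ℝ) * B.card) := by
              refine mul_le_mul_of_nonneg_left hLcard ?_
              positivity
          _ = (Q.card : ℝ) * R.card * B.card * d := by ring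
      have hterm1 : (P.card : ℝ) * L.card / (Fintype.card F) ≤ M * d / qR := by
        rw [← hqRdef]
        exact (div_le_div_iff_of_pos_right hq0).mpr h1
      have hterm2 : Real.sqrt ((Fintype.card F) * P.card * L.card)
          ≤ Real.sqrt (qR * (M * d)) := by
        refine Real.sqrt_le_sqrt ?_
        rw [← hqRdef, mul_assoc]
        exact mul_le_mul_of_nonneg_left h1 hq0.le
      linarith [hterm1, hterm2]
    -- combine
    have hTX : T * X ≤ M * d / qR + Real.sqrt (qR * (M * d)) := hNl.trans hNu
    have hS2 : ∑ s ∈ D j, ((r s : ℝ)) ^ 2 ≤ 2 * τ * X := by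
      rw [hXdef, Finset.mul_sum]
      refine Finset.sum_le_sum fun s hs => ?_
      have h1 := hup s hs
      have h0 : (0:ℝ) ≤ (r s : ℝ) := Nat.cast_nonneg _
      nlinarith [h0, h1]
    have hS4 : ∑ s ∈ D j, ((r s : ℝ)) ^ 2 ≤ 4 * τ ^ 2 * d := by
      have : ∑ s ∈ D j, ((r s : ℝ)) ^ 2 ≤ ∑ _s ∈ D j, (2 * τ) ^ 2 := by
        refine Finset.sum_le_sum fun s hs => ?_
        have h1 := hup s hs
        have h0 : (0:ℝ) ≤ (r s : ℝ) := Nat.cast_nonneg _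
        nlinarith [h0, h1]
      rw [Finset.sum_const, nsmul_eq_mul] at this
      calc ∑ s ∈ D j, ((r s : ℝ)) ^ 2 ≤ (((D j).card : ℕ) : ℝ) * (2 * τ) ^ 2 := this
        _ = 4 * τ ^ 2 * d := by rw [hddef]; ring
    rcases le_or_gt (Real.sqrt (qR * (M * d))) (M * d / qR) with hcase | hcase
    · -- main term dominates
      have h1 : T * (τ * d) ≤ 2 * (M * d / qR) := by
        have h2 : T * (τ * d) ≤ T * X := mul_le_mul_of_nonneg_left hτd hT0.le
        linarith [hTX, h2]
      have hτb : τ ≤ 2 * M / (qR * T) := by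
        rw [le_div_iff₀ (mul_pos hq0 hT0)]
        refine le_of_mul_le_mul_right ?_ hd0
        calc τ * (qR * T) * d = T * (τ * d) * qR := by ring
          _ ≤ 2 * (M * d / qR) * qR := mul_le_mul_of_nonneg_right h1 hq0.le
          _ = 2 * (M * d / qR * qR) := by ring
          _ = 2 * (M * d) := by rw [div_mul_cancel₀ _ (ne_of_gt hq0)]
          _ = 2 * M * d := by ring
      have h5 : 2 * τ * X ≤ 2 * (2 * M / (qR * T)) * X := by
        have := mul_le_mul_of_nonneg_right (mul_le_mul_of_nonneg_left hτb
          (by norm_num : (0:ℝ) ≤ 2)) hX0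
        linarith [this]
      have h6 : (0:ℝ) ≤ 16 * qR * M / T ^ 2 := hc2nn
      calc ∑ s ∈ D j, ((r s : ℝ)) ^ 2 ≤ 2 * τ * X := hS2
        _ ≤ 2 * (2 * M / (qR * T)) * X := h5
        _ = 4 * M / (qR * T) * X := by ring
        _ ≤ 4 * M / (qR * T) * X + 16 * qR * M / T ^ 2 := by linarith [h6]
    · -- sqrt term dominates
      have h1 : T * (τ * d) ≤ 2 * Real.sqrt (qR * (M * d)) := by
        have h2 : T * (τ * d) ≤ T * X := mul_le_mul_of_nonneg_left hτd hT0.le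
        linarith [hTX, h2]
      have hsq : (T * (τ * d)) ^ 2 ≤ 4 * (qR * (M * d)) := by
        have hge : (0:ℝ) ≤ T * (τ * d) :=
          mul_nonneg hT0.le (mul_nonneg hτ0.le hd0.le)
        have h2 : (T * (τ * d)) ^ 2 ≤ (2 * Real.sqrt (qR * (M * d))) ^ 2 :=
          pow_le_pow_left₀ hge h1 2
        calc (T * (τ * d)) ^ 2 ≤ (2 * Real.sqrt (qR * (M * d))) ^ 2 := h2
          _ = 4 * (Real.sqrt (qR * (M * d))) ^ 2 := by ring
          _ = 4 * (qR * (M * d)) := by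
              rw [Real.sq_sqrt (mul_nonneg hq0.le (mul_nonneg hM0 hd0.le))]
      have hτ2d : τ ^ 2 * d ≤ 4 * qR * M / T ^ 2 := by
        rw [le_div_iff₀ (pow_pos hT0 2)]
        refine le_of_mul_le_mul_right ?_ hd0
        calc τ ^ 2 * d * T ^ 2 * d = (T * (τ * d)) ^ 2 := by ring
          _ ≤ 4 * (qR * (M * d)) := hsq
          _ = 4 * qR * M * d := by ring
      have h6 : (0:ℝ) ≤ 4 * M / (qR * T) * X :=
        mul_nonneg (div_nonneg (by linarith [hM0]) (mul_pos hq0 hT0).le) hX0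
      calc ∑ s ∈ D j, ((r s : ℝ)) ^ 2 ≤ 4 * τ ^ 2 * d := hS4
        _ ≤ 4 * (4 * qR * M / T ^ 2) := by linarith [hτ2d]
        _ = 16 * qR * M / T ^ 2 := by ring
        _ ≤ 4 * M / (qR * T) * X + 16 * qR * M / T ^ 2 := by linarith [h6]
  -- decomposition into dyadic classes
  have hmaps : ∀ x ∈ univ.filter (fun s => 1 ≤ r s), Nat.log 2 (r x) ∈ range J := by
    intro x hx
    simp only [mem_filter, mem_univ, true_and] at hx
    rw [mem_range, hJdef]
    exact Nat.lt_succ_of_le (Nat.log_mono_right (hrA x))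
  have hDfib : ∀ j, D j = (univ.filter (fun s => 1 ≤ r s)).filter
      (fun s => Nat.log 2 (r s) = j) := by
    intro j
    simp only [hDdef]
    rw [Finset.filter_filter]
  have hdecompR : ∀ g : F → ℝ, (∀ s, r s = 0 → g s = 0) →
      ∑ j ∈ range J, ∑ s ∈ D j, g s = ∑ s : F, g s := by
    intro g hg
    have h1 : ∑ j ∈ range J, ∑ s ∈ (univ.filter (fun s => 1 ≤ r s)).filter
        (fun s => Nat.log 2 (r s) = j), g s = ∑ s ∈ univ.filter (fun s => 1 ≤ r s), g s :=
      Finset.sum_fiberwise_of_maps_to hmaps g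
    have h2 : ∑ s ∈ univ.filter (fun s => 1 ≤ r s), g s = ∑ s : F, g s := by
      refine Finset.sum_filter_of_ne fun x _ hx => ?_
      by_contra hc
      push_neg at hc
      exact hx (hg x (by omega))
    rw [← h2, ← h1]
    exact Finset.sum_congr rfl fun j _ => by rw [hDfib j]
  have hEdecomp : (∑ s : F, ((r s : ℝ)) ^ 2)
      = ∑ j ∈ range J, ∑ s ∈ D j, ((r s : ℝ)) ^ 2 := by
    rw [hdecompR (fun s => ((r s : ℝ)) ^ 2) (fun s hs => by simp [hs])]
  have hXdecomp : (∑ j ∈ range J, ∑ s ∈ D j, (r s : ℝ)) = ∑ s : F, (r s : ℝ) := by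
    exact hdecompR (fun s => (r s : ℝ)) (fun s hs => by simp [hs])
  have hXtot : (∑ s : F, (r s : ℝ)) = (A.card : ℝ) * B.card := by
    exact_mod_cast hrsum
  -- sum up
  have hfinal : (∑ s : F, ((r s : ℝ)) ^ 2)
      ≤ 4 * M / (qR * T) * ((A.card : ℝ) * B.card) + (J : ℝ) * (16 * qR * M / T ^ 2) := by
    rw [hEdecomp]
    calc ∑ j ∈ range J, ∑ s ∈ D j, ((r s : ℝ)) ^ 2
        ≤ ∑ j ∈ range J, (4 * M / (qR * T) * (∑ s ∈ D j, (r s : ℝ))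
            + 16 * qR * M / T ^ 2) := Finset.sum_le_sum fun j _ => hclass j
      _ = 4 * M / (qR * T) * (∑ j ∈ range J, ∑ s ∈ D j, (r s : ℝ))
            + (J : ℝ) * (16 * qR * M / T ^ 2) := by
          rw [Finset.sum_add_distrib, ← Finset.mul_sum, Finset.sum_const, card_range,
            nsmul_eq_mul]
      _ ≤ 4 * M / (qR * T) * ((A.card : ℝ) * B.card) + (J : ℝ) * (16 * qR * M / T ^ 2) := by
          rw [hXdecomp, hXtot]
  -- J ≤ logb 2 (2|A|)
  have hJlog : (J : ℝ) ≤ Real.logb 2 (2 * A.card) := by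
    have hA1R : (1 : ℝ) ≤ (A.card : ℝ) := by exact_mod_cast hA1
    have hlogb2 : Real.logb 2 (2 * A.card) = 1 + Real.logb 2 (A.card : ℝ) := by
      rw [Real.logb_mul (by norm_num) (ne_of_gt (lt_of_lt_of_le one_pos hA1R)),
        Real.logb_self_eq_one (by norm_num)]
    have hnatlog : ((Nat.log 2 A.card : ℕ) : ℝ) ≤ Real.logb 2 (A.card : ℝ) := by
      have hpow : ((2 : ℝ)) ^ (Nat.log 2 A.card) ≤ (A.card : ℝ) := by
        exact_mod_cast Nat.pow_log_le_self 2 (Nat.one_le_iff_ne_zero.mp hA1)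
      calc ((Nat.log 2 A.card : ℕ) : ℝ)
          = Real.logb 2 ((2 : ℝ) ^ (Nat.log 2 A.card)) := by
            rw [Real.logb_pow, Real.logb_self_eq_one (by norm_num), mul_one]
        _ ≤ Real.logb 2 (A.card : ℝ) := by
            refine Real.logb_le_logb_of_le (by norm_num) (by positivity) hpow
    rw [hJdef, hlogb2]
    push_cast
    linarith [hnatlog]
  -- final arithmetic
  rw [hE]
  push_cast
  have hlog0 : (0 : ℝ) ≤ Real.logb 2 (2 * A.card) := by
    refine Real.logb_nonneg (by norm_num) ?_
    have : (1 : ℝ) ≤ (A.card : ℝ) := by exact_mod_cast hA1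
    linarith
  have ht1 : 4 * M / (qR * T) * ((A.card : ℝ) * B.card)
      = 4 * ((A.card : ℝ) * B.card ^ 2 * Q.card * R.card / (T * qR)) := by
    rw [hMdef]
    field_simp
  have ht2 : (J : ℝ) * (16 * qR * M / T ^ 2)
      ≤ 16 * (qR * Q.card * R.card * B.card * Real.logb 2 (2 * A.card) / T ^ 2) := by
    have hc2 : (0 : ℝ) ≤ 16 * qR * M / T ^ 2 :=
      div_nonneg (mul_nonneg (mul_nonneg (by norm_num) hq0.le) hM0) (pow_pos hT0 2).le
    calc (J : ℝ) * (16 * qR * M / T ^ 2)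
        ≤ Real.logb 2 (2 * A.card) * (16 * qR * M / T ^ 2) :=
          mul_le_mul_of_nonneg_right hJlog hc2
      _ = 16 * (qR * Q.card * R.card * B.card * Real.logb 2 (2 * A.card) / T ^ 2) := by
          rw [hMdef]; ring
    -- done
  have ht1' : (0 : ℝ) ≤ (A.card : ℝ) * B.card ^ 2 * Q.card * R.card / (T * qR) :=
    div_nonneg (by positivity) (mul_pos hT0 hq0).le
  calc (∑ s : F, ((r s : ℝ)) ^ 2)
      ≤ 4 * M / (qR * T) * ((A.card : ℝ) * B.card) + (J : ℝ) * (16 * qR * M / T ^ 2) :=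
        hfinal
    _ ≤ 4 * ((A.card : ℝ) * B.card ^ 2 * Q.card * R.card / (T * qR))
          + 16 * (qR * Q.card * R.card * B.card * Real.logb 2 (2 * A.card) / T ^ 2) := by
        rw [ht1] at *
        linarith [ht2]
    _ ≤ 16 * ((A.card : ℝ) * B.card ^ 2 * Q.card * R.card / (T * qR)
          + qR * Q.card * R.card * B.card * Real.logb 2 (2 * A.card) / T ^ 2) := by
        linarith [ht1']
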